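/- Solutions trapped on one side of the virial surface are unbounded: let q(t) be a solution of Newton's N-body equations defined for all t ∈ ℝ with total energy E = −h < 0, and suppose that either (i) there is a constant c with U(q(t)) ≤ c < 2h for all t, or (ii) there is a constant C with U(q(t)) ≥ C > 2h for all t. Then the solution is unbounded: sup_{t ∈ ℝ} I(t) = ∞. -/

import Mathlib

open Finset Filter MeasureTheory
open scoped RealInnerProductSpace

noncomputable section

/-- Configuration space of `N` bodies in `ℝ³`. -/
abbrev Config (N : ℕ) := Fin N → EuclideanSpace ℝ (Fin 3)

/-- A configuration is collision-free if all bodies occupy distinct positions. -/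
def CollisionFree {N : ℕ} (q : Config N) : Prop :=
  ∀ a b : Fin N, a ≠ b → q a ≠ q b

/-- The Newtonian potential `U(q) = G ∑_{a<b} m_a m_b / |q_a - q_b|`. -/
def potU {N : ℕ} (G : ℝ) (m : Fin N → ℝ) (q : Config N) : ℝ :=
  G * ∑ a : Fin N, ∑ b : Fin N, if a < b then m a * m b / ‖q a - q b‖ else 0

/-- Kinetic energy `K = (1/2) ∑_a m_a |v_a|²`. -/
def kinE {N : ℕ} (m : Fin N → ℝ) (v : Config N) : ℝ :=
  (1 / 2) * ∑ a : Fin N, m a * ‖v a‖ ^ 2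

/-- Moment of inertia `I = ∑_a m_a |q_a|²`. -/
def momI {N : ℕ} (m : Fin N → ℝ) (q : Config N) : ℝ :=
  ∑ a : Fin N, m a * ‖q a‖ ^ 2

/-- `q, v : ℝ → Config N` is a solution of Newton's N-body equations on `J`:
at each time in `J` the configuration is collision-free, `v` is the derivative
of `q`, and the acceleration satisfies
`m_a q̈_a = G ∑_{b ≠ a} m_a m_b (q_b - q_a)/|q_b - q_a|³`. -/
def IsSolutionOn {N : ℕ} (G : ℝ) (m : Fin N → ℝ) (J : Set ℝ)
    (q v : ℝ → Config N) : Prop :=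
  ∀ t ∈ J,
    CollisionFree (q t) ∧
    (∀ a, HasDerivAt (fun s => q s a) (v t a) t) ∧
    (∀ a, ∃ acc : EuclideanSpace ℝ (Fin 3),
      HasDerivAt (fun s => v s a) acc t ∧
      m a • acc = ∑ b ∈ univ.filter (fun b => b ≠ a),
        (G * m a * m b / ‖q t b - q t a‖ ^ 3) • (q t b - q t a))

/-- If `g` has derivative `g'` everywhere, and `g'` has derivative bounded below by
`ε > 0` everywhere, then `g` is not bounded above by `M`. -/
lemma aux_unbounded (g g' : ℝ → ℝ) (ε M : ℝ) (hε : 0 < ε)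
    (hg : ∀ t, HasDerivAt g (g' t) t)
    (hg' : ∀ t, ∃ d, ε ≤ d ∧ HasDerivAt g' d t)
    (hM : ∀ t, g t ≤ M) : False := by
  have hφ : Monotone (fun t => g' t - ε * t) := by
    apply monotone_of_deriv_nonneg
    · intro x
      obtain ⟨d, _, hd⟩ := hg' x
      exact (hd.sub ((hasDerivAt_id x).const_mul ε)).differentiableAt
    · intro x
      obtain ⟨d, hεd, hd⟩ := hg' x
      have : HasDerivAt (fun t => g' t - ε * t) (d - ε * 1) x :=
        hd.sub ((hasDerivAt_id x).const_mul ε)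
      rw [this.deriv]
      linarith
  have hg'lb : ∀ t, 0 ≤ t → g' 0 + ε * t ≤ g' t := by
    intro t ht
    have := hφ ht
    simp only [mul_zero] at this
    linarith
  have hψmono : MonotoneOn (fun t => g t - g' 0 * t - ε / 2 * t ^ 2) (Set.Ici (0:ℝ)) := by
    have hder : ∀ t, HasDerivAt (fun t => g t - g' 0 * t - ε / 2 * t ^ 2)
        (g' t - g' 0 - ε * t) t := by
      intro t
      have h1 : HasDerivAt (fun t : ℝ => g' 0 * t) (g' 0) t := by
        simpa using (hasDerivAt_id t).const_mul (g' 0)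
      have h2 : HasDerivAt (fun t : ℝ => ε / 2 * t ^ 2) (ε * t) t := by
        have := (hasDerivAt_pow 2 t).const_mul (ε / 2)
        have e : ε * t = ε / 2 * (((2:ℕ):ℝ) * t ^ (2 - 1)) := by
          rw [show (2:ℕ) - 1 = 1 from rfl]; push_cast; ring
        rw [e]
        exact this
      exact ((hg t).sub h1).sub h2
    apply monotoneOn_of_deriv_nonneg (convex_Ici 0)
    · exact fun x _ => (hder x).continuousAt.continuousWithinAt
    · exact fun x _ => (hder x).differentiableAt.differentiableWithinAt
    · intro x hx
      rw [interior_Ici] at hx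
      rw [(hder x).deriv]
      have := hg'lb x (le_of_lt hx)
      linarith
  have hglb : ∀ t, 0 ≤ t → g 0 + g' 0 * t + ε / 2 * t ^ 2 ≤ g t := by
    intro t ht
    have := hψmono (Set.self_mem_Ici) (Set.mem_Ici.2 ht) ht
    simp only at this
    nlinarith [this]
  set A := g 0
  set B := g' 0
  set t := max 1 (2 * (|A| + |B| + |M| + 1) / ε) with htdef
  have ht1 : (1:ℝ) ≤ t := le_max_left _ _
  have ht0 : 0 ≤ t := by linarith
  have ht2 : 2 * (|A| + |B| + |M| + 1) / ε ≤ t := le_max_right _ _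
  have hεt : |A| + |B| + |M| + 1 ≤ ε / 2 * t := by
    rw [div_le_iff₀ hε] at ht2
    nlinarith
  have h1 := hglb t ht0
  have h2 := hM t
  nlinarith [neg_abs_le A, neg_abs_le B, le_abs_self M, abs_nonneg A, abs_nonneg B, abs_nonneg M]

/-- Doubling: a symmetric summand over distinct ordered pairs equals twice the
sum over `a < b`. -/
lemma sum_ne_eq_two_mul_lt {N : ℕ} (e : Fin N → Fin N → ℝ)
    (hsym : ∀ a b, e a b = e b a) :
    ∑ a : Fin N, ∑ b ∈ univ.filter (fun b => b ≠ a), e a b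
      = 2 * ∑ a : Fin N, ∑ b : Fin N, if a < b then e a b else 0 := by
  have key : ∀ a b : Fin N, (if b ≠ a then e a b else 0)
      = (if a < b then e a b else 0) + (if b < a then e a b else 0) := by
    intro a b
    rcases lt_trichotomy a b with hlt | heq | hgt
    · simp [hlt, hlt.ne', hlt.not_gt, hlt.ne]
    · simp [heq]
    · simp [hgt, hgt.ne', hgt.not_gt, hgt.ne]
  calc ∑ a : Fin N, ∑ b ∈ univ.filter (fun b => b ≠ a), e a b
      = ∑ a : Fin N, ∑ b : Fin N, if b ≠ a then e a b else 0 := by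
        simp [Finset.sum_filter]
    _ = (∑ a : Fin N, ∑ b : Fin N, if a < b then e a b else 0)
        + ∑ a : Fin N, ∑ b : Fin N, if b < a then e a b else 0 := by
        rw [← Finset.sum_add_distrib]
        refine Finset.sum_congr rfl fun a _ => ?_
        rw [← Finset.sum_add_distrib]
        exact Finset.sum_congr rfl fun b _ => key a b
    _ = 2 * ∑ a : Fin N, ∑ b : Fin N, if a < b then e a b else 0 := by
        rw [Finset.sum_comm (f := fun a b => if b < a then e a b else 0)]
        have : ∀ a b : Fin N, (if a < b then e b a else 0) = (if a < b then e a b else 0) := by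
          intro a b; by_cases hab : a < b <;> simp [hab, hsym a b]
        simp only [this]
        ring

/-- Virial identity: `∑_a ⟪q_a, F_a⟫ = -U`. -/
lemma virial {N : ℕ} (G : ℝ) (m : Fin N → ℝ) (q : Config N) (hq : CollisionFree q) :
    ∑ a : Fin N, ∑ b ∈ univ.filter (fun b => b ≠ a),
      (G * m a * m b / ‖q b - q a‖ ^ 3) * ⟪q a, q b - q a⟫ = - potU G m q := by
  set w : Fin N → Fin N → ℝ :=
    fun a b => (G * m a * m b / ‖q b - q a‖ ^ 3) * ⟪q a, q b - q a⟫ with hw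
  set S : ℝ := ∑ a : Fin N, ∑ b ∈ univ.filter (fun b => b ≠ a), w a b with hS
  have hswap : S = ∑ a : Fin N, ∑ b ∈ univ.filter (fun b => b ≠ a), w b a := by
    rw [hS]
    simp only [Finset.sum_filter]
    rw [Finset.sum_comm (f := fun a b => if b ≠ a then w a b else 0)]
    refine Finset.sum_congr rfl fun a _ => Finset.sum_congr rfl fun b _ => ?_
    simp only [ne_comm]
  have key : ∀ a b : Fin N, b ≠ a → w a b + w b a = -(G * m a * m b / ‖q a - q b‖) := by
    intro a b hba
    have hne : q a - q b ≠ 0 := sub_ne_zero_of_ne (hq a b (Ne.symm hba))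
    have hr : (0:ℝ) < ‖q a - q b‖ := norm_pos_iff.2 hne
    have hrev : ‖q b - q a‖ = ‖q a - q b‖ := norm_sub_rev _ _
    have hinner : ⟪q a, q b - q a⟫ + ⟪q b, q a - q b⟫ = -‖q a - q b‖ ^ 2 := by
      simp only [inner_sub_right]
      have h1 : ⟪q a, q a⟫ = ‖q a‖ ^ 2 := real_inner_self_eq_norm_sq _
      have h2 : ⟪q b, q b⟫ = ‖q b‖ ^ 2 := real_inner_self_eq_norm_sq _
      have h3 : ‖q a - q b‖ ^ 2 = ‖q a‖ ^ 2 - 2 * ⟪q a, q b⟫ + ‖q b‖ ^ 2 :=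
        norm_sub_sq_real _ _
      have h4 : ⟪q b, q a⟫ = ⟪q a, q b⟫ := real_inner_comm _ _
      linarith
    have hcsym : G * m b * m a / ‖q a - q b‖ ^ 3 = G * m a * m b / ‖q b - q a‖ ^ 3 := by
      rw [hrev]; ring
    rw [hw]
    simp only
    rw [hcsym]
    rw [show (G * m a * m b / ‖q b - q a‖ ^ 3) * ⟪q a, q b - q a⟫
        + (G * m a * m b / ‖q b - q a‖ ^ 3) * ⟪q b, q a - q b⟫
        = (G * m a * m b / ‖q b - q a‖ ^ 3) * (⟪q a, q b - q a⟫ + ⟪q b, q a - q b⟫) by ring]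
    rw [hinner, hrev]
    field_simp
  have h2S : S + S = -(∑ a : Fin N, ∑ b ∈ univ.filter (fun b => b ≠ a),
      G * m a * m b / ‖q a - q b‖) := by
    nth_rewrite 2 [hswap]
    rw [hS, ← Finset.sum_add_distrib, ← Finset.sum_neg_distrib]
    refine Finset.sum_congr rfl fun a _ => ?_
    rw [← Finset.sum_add_distrib, ← Finset.sum_neg_distrib]
    refine Finset.sum_congr rfl fun b hb => ?_
    have hba : b ≠ a := (Finset.mem_filter.1 hb).2
    rw [key a b hba]
  have hdouble : ∑ a : Fin N, ∑ b ∈ univ.filter (fun b => b ≠ a),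
      G * m a * m b / ‖q a - q b‖ = 2 * potU G m q := by
    have hUeq : ∑ a : Fin N, ∑ b : Fin N,
        (if a < b then G * m a * m b / ‖q a - q b‖ else 0) = potU G m q := by
      rw [potU, Finset.mul_sum]
      refine Finset.sum_congr rfl fun a _ => ?_
      rw [Finset.mul_sum]
      refine Finset.sum_congr rfl fun b _ => ?_
      by_cases hab : a < b <;> simp [hab] <;> ring
    rw [sum_ne_eq_two_mul_lt (fun a b => G * m a * m b / ‖q a - q b‖)
      (by intro a b; rw [norm_sub_rev]; ring), hUeq]
  have : S + S = -(2 * potU G m q) := by rw [h2S, hdouble]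
  linarith

/-- solutions trapped on one side of the virial surface are
unbounded: if a solution defined for all time with energy `-h < 0` satisfies
either `U ≤ c < 2h` for all `t` or `U ≥ C > 2h` for all `t`, then
`sup_t I(t) = ∞`, i.e. `I` is not bounded above. -/
theorem trapped_one_side_unbounded
    (N : ℕ) (hN : 2 ≤ N) (G : ℝ) (hG : 0 < G)
    (m : Fin N → ℝ) (hm : ∀ a, 0 < m a)
    (q v : ℝ → Config N)
    (hsol : IsSolutionOn G m Set.univ q v)
    (h : ℝ) (hh : 0 < h)
    (hE : ∀ t : ℝ, kinE m (v t) - potU G m (q t) = -h)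
    (htrapped :
      (∃ c : ℝ, c < 2 * h ∧ ∀ t : ℝ, potU G m (q t) ≤ c) ∨
      (∃ C : ℝ, 2 * h < C ∧ ∀ t : ℝ, C ≤ potU G m (q t))) :
    ¬ ∃ M : ℝ, ∀ t : ℝ, momI m (q t) ≤ M := by
  rintro ⟨M, hM⟩
  have hcf : ∀ t, CollisionFree (q t) := fun t => (hsol t (Set.mem_univ t)).1
  have hqd : ∀ t a, HasDerivAt (fun s => q s a) (v t a) t :=
    fun t => (hsol t (Set.mem_univ t)).2.1
  -- the forced acceleration
  set accF : ℝ → Config N := fun t a => (m a)⁻¹ • ∑ b ∈ univ.filter (fun b => b ≠ a),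
      (G * m a * m b / ‖q t b - q t a‖ ^ 3) • (q t b - q t a) with haccF
  have hvd : ∀ t a, HasDerivAt (fun s => v s a) (accF t a) t := by
    intro t a
    obtain ⟨acc, hacc, heq⟩ := (hsol t (Set.mem_univ t)).2.2 a
    have : accF t a = acc := by
      rw [haccF]
      simp only
      rw [← heq, smul_smul, inv_mul_cancel₀ (hm a).ne', one_smul]
    rwa [this]
  -- first derivative of the moment of inertia
  have hfd : ∀ t, HasDerivAt (fun s => momI m (q s))
      (∑ a : Fin N, 2 * m a * ⟪q t a, v t a⟫) t := by
    intro t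
    have hterm : ∀ a : Fin N, HasDerivAt (fun s => m a * ‖q s a‖ ^ 2)
        (2 * m a * ⟪q t a, v t a⟫) t := by
      intro a
      have h1 := (HasDerivAt.inner ℝ (hqd t a) (hqd t a)).const_mul (m a)
      have h2 : (fun s => m a * ⟪q s a, q s a⟫) = fun s => m a * ‖q s a‖ ^ 2 := by
        funext s; rw [real_inner_self_eq_norm_sq]
      rw [h2] at h1
      have e : 2 * m a * ⟪q t a, v t a⟫ = m a * (⟪q t a, v t a⟫ + ⟪v t a, q t a⟫) := by
        rw [real_inner_comm (v t a) (q t a)]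
        ring
      rw [e]
      exact h1
    exact HasDerivAt.fun_sum (fun a _ => hterm a)
  -- second derivative
  have hD1d : ∀ t, HasDerivAt (fun s => ∑ a : Fin N, 2 * m a * ⟪q s a, v s a⟫)
      (2 * potU G m (q t) - 4 * h) t := by
    intro t
    have hterm : ∀ a : Fin N, HasDerivAt (fun s => 2 * m a * ⟪q s a, v s a⟫)
        (2 * m a * (⟪q t a, accF t a⟫ + ⟪v t a, v t a⟫)) t :=
      fun a => (HasDerivAt.inner ℝ (hqd t a) (hvd t a)).const_mul (2 * m a)
    have hsum := HasDerivAt.fun_sum (fun a (_ : a ∈ (univ : Finset (Fin N))) => hterm a)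
    have hval : (∑ a : Fin N, 2 * m a * (⟪q t a, accF t a⟫ + ⟪v t a, v t a⟫))
        = 2 * potU G m (q t) - 4 * h := by
      have hsplit : (∑ a : Fin N, 2 * m a * (⟪q t a, accF t a⟫ + ⟪v t a, v t a⟫))
          = (∑ a : Fin N, 2 * m a * ⟪q t a, accF t a⟫)
            + ∑ a : Fin N, 2 * m a * ⟪v t a, v t a⟫ := by
        rw [← Finset.sum_add_distrib]
        exact Finset.sum_congr rfl fun a _ => by ring
      have hpart2 : (∑ a : Fin N, 2 * m a * ⟪v t a, v t a⟫) = 4 * kinE m (v t) := by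
        rw [kinE, Finset.mul_sum, Finset.mul_sum]
        refine Finset.sum_congr rfl fun a _ => ?_
        rw [real_inner_self_eq_norm_sq]
        ring
      have hpart1 : (∑ a : Fin N, 2 * m a * ⟪q t a, accF t a⟫)
          = -(2 * potU G m (q t)) := by
        have hterm1 : ∀ a : Fin N, 2 * m a * ⟪q t a, accF t a⟫
            = 2 * ∑ b ∈ univ.filter (fun b => b ≠ a),
                (G * m a * m b / ‖q t b - q t a‖ ^ 3) * ⟪q t a, q t b - q t a⟫ := by
          intro a
          rw [haccF]
          simp only
          rw [real_inner_smul_right, inner_sum]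
          simp only [real_inner_smul_right]
          rw [← mul_assoc]
          have hma : m a ≠ 0 := (hm a).ne'
          rw [show 2 * m a * (m a)⁻¹ = 2 by field_simp]
        rw [Finset.sum_congr rfl fun a _ => hterm1 a, ← Finset.mul_sum,
          virial G m (q t) (hcf t)]
        ring
      rw [hsplit, hpart1, hpart2]
      have hEt := hE t
      linarith
    rw [hval] at hsum
    exact hsum
  -- case analysis
  rcases htrapped with ⟨c, hc, hU⟩ | ⟨C, hC, hU⟩
  · -- U ≤ c < 2h : -I is unbounded above, contradicting I ≥ 0
    refine aux_unbounded (fun t => -(momI m (q t)))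
      (fun t => -(∑ a : Fin N, 2 * m a * ⟪q t a, v t a⟫)) (4 * h - 2 * c) 0
      (by linarith) (fun t => (hfd t).neg) (fun t => ?_) (fun t => ?_)
    · refine ⟨-(2 * potU G m (q t) - 4 * h), ?_, (hD1d t).neg⟩
      have := hU t
      linarith
    · simp only [neg_nonpos]
      exact Finset.sum_nonneg fun a _ =>
        mul_nonneg (hm a).le (sq_nonneg _)
  · -- U ≥ C > 2h : I is unbounded above, contradicting the bound M
    refine aux_unbounded (fun t => momI m (q t))
      (fun t => ∑ a : Fin N, 2 * m a * ⟪q t a, v t a⟫) (2 * C - 4 * h) M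
      (by linarith) hfd (fun t => ?_) hM
    refine ⟨2 * potU G m (q t) - 4 * h, ?_, hD1d t⟩
    have := hU t
    linarith
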